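/- Let K be a field and A ∈ Mat_N(K((s))) a square matrix over the field of formal Laurent series. Suppose that every coefficient of the characteristic polynomial of A lies in the subring K[[s]] of formal power series (i.e., each such Laurent series has zero coefficients in all negative degrees). Then A is conjugate over K((s)) to a matrix with entries in K[[s]]: there exists an invertible matrix P ∈ GL_N(K((s))) such that every entry of P · A · P⁻¹ lies in K[[s]]. -/

import Mathlib

open Matrix

set_option maxHeartbeats 2000000 in
set_option synthInstance.maxHeartbeats 400000 in
/-- If the characteristic polynomial of a matrix over the Laurent series field `K((s))`
has all its coefficients in the power series subring `K[[s]]` (i.e. all negative-degree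
coefficients of these Laurent series vanish), then the matrix is conjugate over `K((s))`
to a matrix with entries in `K[[s]]`. -/
theorem conjugate_to_integral_of_charpoly_integral
    {K : Type} [Field K] {N : ℕ} (A : Matrix (Fin N) (Fin N) (LaurentSeries K))
    (hA : ∀ (i : ℕ) (m : ℤ), m < 0 → (A.charpoly.coeff i).coeff m = 0) :
    ∃ P : Matrix (Fin N) (Fin N) (LaurentSeries K), IsUnit P ∧
      ∀ (a b : Fin N) (m : ℤ), m < 0 → ((P * A * P⁻¹) a b).coeff m = 0 := by
  classical
  -- integrality characterization
  have hint : ∀ x : LaurentSeries K, (∀ m : ℤ, m < 0 → x.coeff m = 0) →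
      ∃ r : PowerSeries K, (algebraMap (PowerSeries K) (LaurentSeries K)) r = x := by
    intro x hx
    refine ⟨PowerSeries.mk fun n => x.coeff (n : ℤ), ?_⟩
    apply HahnSeries.ext
    funext m
    rw [LaurentSeries.coe_algebraMap]
    show ((PowerSeries.mk fun n => x.coeff (n : ℤ) : PowerSeries K) :
        LaurentSeries K).coeff m = x.coeff m
    rw [PowerSeries.coeff_coe]
    by_cases hm : m < 0
    · rw [if_pos hm, hx m hm]
    · rw [if_neg hm, PowerSeries.coeff_mk]
      congr 1
      omega
  have hc : ∀ i : ℕ, ∃ r : PowerSeries K,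
      (algebraMap (PowerSeries K) (LaurentSeries K)) r = A.charpoly.coeff i :=
    fun i => hint _ (hA i)
  -- standard basis
  set e : Module.Basis (Fin N) (LaurentSeries K) (Fin N → LaurentSeries K) :=
    Pi.basisFun (LaurentSeries K) (Fin N) with he
  -- the lattice generators
  set g : Fin N × Fin N → (Fin N → LaurentSeries K) :=
    fun p => (A ^ (p.1 : ℕ)) *ᵥ (e p.2) with hg
  set L : Submodule (PowerSeries K) (Fin N → LaurentSeries K) :=
    Submodule.span (PowerSeries K) (Set.range g) with hL
  -- sums of matrices act on vectors termwise
  have hsum : ∀ (s : Finset ℕ) (f : ℕ → Matrix (Fin N) (Fin N) (LaurentSeries K))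
      (v : Fin N → LaurentSeries K),
      (∑ i ∈ s, f i) *ᵥ v = ∑ i ∈ s, (f i) *ᵥ v := by
    intro s f v
    induction s using Finset.cons_induction with
    | empty => simp [Matrix.zero_mulVec]
    | cons a s ha ih => rw [Finset.sum_cons, Finset.sum_cons, Matrix.add_mulVec, ih]
  -- a scalar matrix acting on a vector
  have halgsmul : ∀ (r : PowerSeries K) (w : Fin N → LaurentSeries K),
      (algebraMap (LaurentSeries K) (Matrix (Fin N) (Fin N) (LaurentSeries K))
        (algebraMap (PowerSeries K) (LaurentSeries K) r)) *ᵥ w = r • w := by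
    intro r w
    funext idx
    rw [Matrix.algebraMap_eq_diagonal]
    show (Matrix.diagonal _ *ᵥ w) idx = (r • w) idx
    rw [Matrix.mulVec_diagonal]
    simp [Algebra.smul_def]
  -- Cayley-Hamilton
  have hCH : A ^ N = -∑ i ∈ Finset.range N,
      (algebraMap (LaurentSeries K) (Matrix (Fin N) (Fin N) (LaurentSeries K))
        (A.charpoly.coeff i)) * A ^ i := by
    have h0 := Matrix.aeval_self_charpoly A
    rw [Polynomial.aeval_def, Polynomial.eval₂_eq_sum_range] at h0
    have hdeg : A.charpoly.natDegree = N := by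
      simp [Matrix.charpoly_natDegree_eq_dim]
    have h1 : A.charpoly.coeff N = 1 := by
      have := (A.charpoly_monic).coeff_natDegree
      rwa [hdeg] at this
    rw [hdeg, Finset.sum_range_succ, h1, _root_.map_one, one_mul] at h0
    exact eq_neg_of_add_eq_zero_right h0
  -- the lattice is A-stable
  have hstab : ∀ x ∈ L, A *ᵥ x ∈ L := by
    intro x hx
    induction hx using Submodule.span_induction with
    | mem x hxg =>
        obtain ⟨⟨k, j⟩, rfl⟩ := hxg
        show A *ᵥ ((A ^ (k : ℕ)) *ᵥ (e j)) ∈ L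
        rw [Matrix.mulVec_mulVec, ← pow_succ']
        by_cases hk : (k : ℕ) + 1 < N
        · exact Submodule.subset_span ⟨(⟨(k : ℕ) + 1, hk⟩, j), rfl⟩
        · have hkN : (k : ℕ) + 1 = N := by omega
          rw [hkN, hCH, Matrix.neg_mulVec, hsum]
          refine neg_mem (Submodule.sum_mem _ fun i hi => ?_)
          obtain ⟨r, hr⟩ := hc i
          rw [← Matrix.mulVec_mulVec, ← hr, halgsmul r _]
          exact Submodule.smul_mem _ _
            (Submodule.subset_span ⟨(⟨i, Finset.mem_range.mp hi⟩, j), rfl⟩)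
    | zero => simp [Matrix.mulVec_zero]
    | add x y _ _ hx hy => rw [Matrix.mulVec_add]; exact add_mem hx hy
    | smul r x _ hx =>
        have h1 : A *ᵥ (r • x) = r • (A *ᵥ x) := by
          have h2 : A *ᵥ ((algebraMap (PowerSeries K) (LaurentSeries K) r) • x)
              = (algebraMap (PowerSeries K) (LaurentSeries K) r) • (A *ᵥ x) := by
            rw [← Matrix.mulVecLin_apply, ← Matrix.mulVecLin_apply, _root_.map_smul]
          rwa [algebraMap_smul, algebraMap_smul] at h2
        rw [h1]
        exact Submodule.smul_mem _ _ hx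
  -- the lattice is finitely generated, torsion free, hence free over the PID K[[X]]
  haveI hfinL : Module.Finite (PowerSeries K) L :=
    Module.Finite.span_of_finite _ (Set.finite_range g)
  haveI hnz0 : NoZeroSMulDivisors (PowerSeries K) (LaurentSeries K) :=
    by
      rw [noZeroSMulDivisors_iff_right_eq_zero_of_smul]
      intro r hr m hm
      rw [Algebra.smul_def] at hm
      exact (mul_eq_zero.mp hm).resolve_left
        ((map_ne_zero_iff _ (IsFractionRing.injective (PowerSeries K) (LaurentSeries K))).mpr hr)
  haveI hnz1 : NoZeroSMulDivisors (PowerSeries K) (Fin N → LaurentSeries K) :=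
    Pi.noZeroSMulDivisors _
  haveI : Module.IsTorsionFree (PowerSeries K) L := inferInstance
  obtain ⟨n, bR⟩ := Module.basisOfFiniteTypeTorsionFree' (R := PowerSeries K) (M := L)
  set bv : Fin n → (Fin N → LaurentSeries K) := fun i => (bR i : Fin N → LaurentSeries K) with hbv
  -- the basis vectors are linearly independent over the Laurent series field
  have hliR : LinearIndependent (PowerSeries K) bv :=
    bR.linearIndependent.map' L.subtype L.ker_subtype
  have hli : LinearIndependent (LaurentSeries K) bv :=
    (LinearIndependent.iff_fractionRing (PowerSeries K) (LaurentSeries K)).mp hliR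
  -- every element of L is in the F-span of bv
  have hLle : ∀ x ∈ L, x ∈ Submodule.span (LaurentSeries K) (Set.range bv) := by
    intro x hx
    have h0 : x ∈ Submodule.map L.subtype
        (Submodule.span (PowerSeries K) (Set.range bR)) := by
      rw [bR.span_eq, Submodule.map_top, Submodule.range_subtype]
      exact hx
    rw [Submodule.map_span] at h0
    have h2 : L.subtype '' Set.range ⇑bR = Set.range bv := by
      rw [← Set.range_comp]; rfl
    rw [h2] at h0
    exact Submodule.span_subset_span (PowerSeries K) (LaurentSeries K) _ h0
  -- the standard basis vectors lie in L
  have heL : ∀ j : Fin N, e j ∈ L := by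
    intro j
    have hj0 : (0 : ℕ) < N := Nat.lt_of_le_of_lt (Nat.zero_le _) j.isLt
    have : e j = g (⟨0, hj0⟩, j) := by
      show e j = (A ^ ((0:ℕ))) *ᵥ e j
      rw [pow_zero, Matrix.one_mulVec]
    rw [this]
    exact Submodule.subset_span ⟨_, rfl⟩
  -- hence bv spans everything over F
  have hsp : ⊤ ≤ Submodule.span (LaurentSeries K) (Set.range bv) := by
    rw [← e.span_eq]
    refine Submodule.span_le.mpr ?_
    rintro _ ⟨j, rfl⟩
    exact hLle _ (heL j)
  set bF : Module.Basis (Fin n) (LaurentSeries K) (Fin N → LaurentSeries K) := Module.Basis.mk hli hsp with hbF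
  have hcard : n = N := by
    have h1 := Module.finrank_eq_card_basis bF
    rw [Module.finrank_fin_fun, Fintype.card_fin] at h1
    omega
  set σ : Fin n ≃ Fin N := finCongr hcard with hσ
  set bb : Module.Basis (Fin N) (LaurentSeries K) (Fin N → LaurentSeries K) := bF.reindex σ with hbb
  have hbbv : ∀ i : Fin N, bb i = bv (σ.symm i) := by
    intro i
    rw [hbb, Module.Basis.reindex_apply, hbF, Module.Basis.mk_apply]
  have hbbL : ∀ i : Fin N, bb i ∈ L := by
    intro i
    rw [hbbv]
    exact (bR (σ.symm i)).2
  -- the change of basis matrix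
  set Q : Matrix (Fin N) (Fin N) (LaurentSeries K) := e.toMatrix ⇑bb with hQ
  haveI hQinv : Invertible Q := e.invertibleToMatrix bb
  have hQu : IsUnit Q := isUnit_of_invertible Q
  have hQdet : IsUnit Q.det := (Matrix.isUnit_iff_isUnit_det Q).mp hQu
  have hQapp : ∀ i j, Q i j = bb j i := by
    intro i j
    rw [hQ, Module.Basis.toMatrix_apply, he, Pi.basisFun_repr]
  -- the conjugated matrix, with entries the coordinates of A *ᵥ bb j
  have hwL : ∀ j : Fin N, A *ᵥ bb j ∈ L := fun j => hstab _ (hbbL j)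
  set rr : Fin N → Fin N → PowerSeries K :=
    fun i j => bR.repr ⟨A *ᵥ bb j, hwL j⟩ (σ.symm i) with hrr
  set cM : Matrix (Fin N) (Fin N) (LaurentSeries K) :=
    Matrix.of fun i j => algebraMap (PowerSeries K) (LaurentSeries K) (rr i j) with hcM
  -- the representation identity
  have hrep : ∀ j : Fin N, A *ᵥ bb j = ∑ i : Fin N, cM i j • bb i := by
    intro j
    have h1 := congrArg L.subtype (bR.sum_repr ⟨A *ᵥ bb j, hwL j⟩).symm
    rw [map_sum] at h1
    simp only [_root_.map_smul] at h1
    have h2 : L.subtype (⟨A *ᵥ bb j, hwL j⟩ : L) = A *ᵥ bb j := rfl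
    rw [h2] at h1
    have h3 : ∀ i' : Fin n, (bR.repr ⟨A *ᵥ bb j, hwL j⟩ i') • (L.subtype (bR i'))
        = (algebraMap (PowerSeries K) (LaurentSeries K) (bR.repr ⟨A *ᵥ bb j, hwL j⟩ i'))
          • (bv i') := by
      intro i'
      rw [algebraMap_smul]
      rfl
    rw [Finset.sum_congr rfl fun i' _ => h3 i'] at h1
    rw [h1]
    rw [← Equiv.sum_comp σ.symm
      (fun i' => (algebraMap (PowerSeries K) (LaurentSeries K)
        (bR.repr ⟨A *ᵥ bb j, hwL j⟩ i')) • (bv i'))]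
    refine Finset.sum_congr rfl fun i _ => ?_
    rw [hcM]
    show (algebraMap (PowerSeries K) (LaurentSeries K) (rr i j)) • bv (σ.symm i)
      = (algebraMap (PowerSeries K) (LaurentSeries K) (rr i j)) • bb i
    rw [hbbv]
  -- hence A * Q = Q * cM
  have hAQ : A * Q = Q * cM := by
    refine Matrix.ext fun k j => ?_
    rw [Matrix.mul_apply, Matrix.mul_apply]
    have hL1 : ∑ i, A k i * Q i j = (A *ᵥ bb j) k := by
      rw [Matrix.mulVec]
      rw [dotProduct]
      exact Finset.sum_congr rfl fun i _ => by rw [hQapp]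
    rw [hL1, hrep j]
    rw [Finset.sum_apply]
    refine Finset.sum_congr rfl fun i _ => ?_
    rw [Pi.smul_apply, smul_eq_mul, hQapp, mul_comm]
  -- finish
  refine ⟨Q⁻¹, ?_, ?_⟩
  · exact ⟨⟨Q⁻¹, Q, Matrix.nonsing_inv_mul Q hQdet, Matrix.mul_nonsing_inv Q hQdet⟩, rfl⟩
  · intro a b m hm
    have hPAP : Q⁻¹ * A * Q⁻¹⁻¹ = cM := by
      rw [Matrix.nonsing_inv_nonsing_inv Q hQdet, Matrix.mul_assoc, hAQ, ← Matrix.mul_assoc,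
        Matrix.nonsing_inv_mul Q hQdet, Matrix.one_mul]
    rw [hPAP]
    show ((rr a b : PowerSeries K) : LaurentSeries K).coeff m = 0
    rw [PowerSeries.coeff_coe, if_pos hm]
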